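/- If the perturbation function p : ℝ^m → ℝ is lower semicontinuous at 0, bounded below on ℝ^m by an affine-plus-quadratic minorant, then sup over (λ, α) ∈ ℝ^m × (0,∞) of inf_u [ p(u) + ⟨λ, u⟩ + α‖u‖² ] equals p(0); i.e., quadratic augmentation closes the duality gap for lsc stable perturbation functions that satisfy the growth condition. -/

import Mathlib

open scoped BigOperators

/-- Quadratic augmentation closes the duality gap for lsc perturbation functions
satisfying the growth condition. -/
theorem strong_duality_from_stability {m : ℕ} (p : (Fin m → ℝ) → EReal)
    (hne_bot : ∀ u, p u ≠ ⊥)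
    (hfin : ∃ r : ℝ, p 0 = (r : EReal))
    (hlsc : LowerSemicontinuousAt p 0)
    (hgrowth : ∃ (lam₀ : Fin m → ℝ) (α₀ : ℝ), 0 < α₀ ∧
        (⨅ u : Fin m → ℝ,
          (p u + ((∑ i, lam₀ i * u i + α₀ * ∑ i, (u i) ^ 2 : ℝ) : EReal))) ≠ ⊥) :
    (⨆ lam : Fin m → ℝ, ⨆ α : ℝ, ⨆ _ : 0 < α,
        ⨅ u : Fin m → ℝ,
          (p u + ((∑ i, lam i * u i + α * ∑ i, (u i) ^ 2 : ℝ) : EReal)))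
      = p 0 := by
  obtain ⟨r, hr⟩ := hfin
  obtain ⟨lam₀, α₀, hα₀, hBne⟩ := hgrowth
  apply le_antisymm
  · -- weak duality: evaluate the infimum at u = 0
    refine iSup_le fun lam => iSup_le fun α => iSup_le fun hα => ?_
    refine (iInf_le _ 0).trans ?_
    simp
  · -- strong duality
    rw [← EReal.ge_of_forall_gt_iff_ge]
    intro c hc
    have hcr : c < r := by rw [hr] at hc; exact_mod_cast hc
    -- a real lower bound for the growth infimum
    obtain ⟨B, hB⟩ : ∃ B : ℝ, (B : EReal) ≤ ⨅ u : Fin m → ℝ,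
        (p u + ((∑ i, lam₀ i * u i + α₀ * ∑ i, (u i) ^ 2 : ℝ) : EReal)) := by
      by_cases htop : (⨅ u : Fin m → ℝ,
          (p u + ((∑ i, lam₀ i * u i + α₀ * ∑ i, (u i) ^ 2 : ℝ) : EReal))) = ⊤
      · exact ⟨0, by rw [htop]; exact le_top⟩
      · exact ⟨(⨅ u : Fin m → ℝ,
          (p u + ((∑ i, lam₀ i * u i + α₀ * ∑ i, (u i) ^ 2 : ℝ) : EReal))).toReal,
          (EReal.coe_toReal htop hBne).le⟩
    have hBu : ∀ u : Fin m → ℝ,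
        (B : EReal) ≤ p u + ((∑ i, lam₀ i * u i + α₀ * ∑ i, (u i) ^ 2 : ℝ) : EReal) :=
      fun u => hB.trans (iInf_le _ u)
    -- lower semicontinuity at 0
    have hy : (((c + r) / 2 : ℝ) : EReal) < p 0 := by
      rw [hr]; exact_mod_cast (by linarith : (c + r) / 2 < r)
    have hev := hlsc _ hy
    rw [Metric.eventually_nhds_iff] at hev
    obtain ⟨ε, hε, hball⟩ := hev
    obtain ⟨L, hLdef, hL0⟩ : ∃ L : ℝ, L = ∑ i, |lam₀ i| ∧ 0 ≤ L :=
      ⟨∑ i, |lam₀ i|, rfl, Finset.sum_nonneg fun i _ => abs_nonneg _⟩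
    obtain ⟨δ, hδ, hδε, hδL⟩ : ∃ δ : ℝ, 0 < δ ∧ δ < ε ∧ L * δ ≤ (r - c) / 2 := by
      refine ⟨min (ε / 2) ((r - c) / (2 * (L + 1))),
        lt_min (by linarith) (div_pos (by linarith) (by linarith)), ?_, ?_⟩
      · calc min (ε / 2) ((r - c) / (2 * (L + 1))) ≤ ε / 2 := min_le_left _ _
          _ < ε := by linarith
      · have h2 : min (ε / 2) ((r - c) / (2 * (L + 1))) ≤ (r - c) / (2 * (L + 1)) :=
          min_le_right _ _
        have h3 : min (ε / 2) ((r - c) / (2 * (L + 1))) * (2 * (L + 1)) ≤ r - c :=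
          (le_div_iff₀ (by linarith)).1 h2
        have h4 : 0 ≤ min (ε / 2) ((r - c) / (2 * (L + 1))) :=
          le_min (by linarith) (le_of_lt (div_pos (by linarith) (by linarith)))
        nlinarith
    obtain ⟨α, hα, hαα₀, hαd⟩ : ∃ α : ℝ, 0 < α ∧ α₀ ≤ α ∧ c - B ≤ (α - α₀) * δ ^ 2 := by
      refine ⟨α₀ + max (c - B) 0 / δ ^ 2, ?_, ?_, ?_⟩
      · have : (0:ℝ) ≤ max (c - B) 0 / δ ^ 2 :=
          div_nonneg (le_max_right _ _) (sq_nonneg _)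
        linarith
      · have : (0:ℝ) ≤ max (c - B) 0 / δ ^ 2 :=
          div_nonneg (le_max_right _ _) (sq_nonneg _)
        linarith
      · have h1 : (α₀ + max (c - B) 0 / δ ^ 2 - α₀) * δ ^ 2 = max (c - B) 0 := by
          field_simp
          ring
        rw [h1]
        exact le_max_left _ _
    refine le_iSup_of_le lam₀ (le_iSup_of_le α (le_iSup_of_le hα (le_iInf fun u => ?_)))
    have hui : ∀ i, |u i| ≤ dist u 0 := by
      intro i
      have := dist_le_pi_dist u 0 i
      simpa [Real.dist_eq] using this
    by_cases hcase : dist u 0 < δ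
    · -- near the origin : use lower semicontinuity
      have hpu : (((c + r) / 2 : ℝ) : EReal) < p u := by
        apply hball
        exact hcase.trans hδε
      have hS : -(L * δ) ≤ ∑ i, lam₀ i * u i + α * ∑ i, (u i) ^ 2 := by
        have h1 : |∑ i, lam₀ i * u i| ≤ L * δ := by
          calc |∑ i, lam₀ i * u i| ≤ ∑ i, |lam₀ i * u i| := Finset.abs_sum_le_sum_abs _ _
            _ ≤ ∑ i, |lam₀ i| * δ := by
                refine Finset.sum_le_sum fun i _ => ?_
                rw [abs_mul]
                exact mul_le_mul_of_nonneg_left ((hui i).trans hcase.le) (abs_nonneg _)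
            _ = L * δ := by rw [hLdef, Finset.sum_mul]
        have h2 : (0:ℝ) ≤ α * ∑ i, (u i) ^ 2 :=
          mul_nonneg hα.le (Finset.sum_nonneg fun i _ => sq_nonneg _)
        have h3 := (abs_le.1 h1).1
        linarith
      have hreal : c ≤ (c + r) / 2 + (∑ i, lam₀ i * u i + α * ∑ i, (u i) ^ 2) := by
        linarith
      calc (c : EReal) ≤ (((c + r) / 2 + (∑ i, lam₀ i * u i + α * ∑ i, (u i) ^ 2) : ℝ) : EReal) :=
            EReal.coe_le_coe_iff.2 hreal
        _ = (((c + r) / 2 : ℝ) : EReal) + ((∑ i, lam₀ i * u i + α * ∑ i, (u i) ^ 2 : ℝ) : EReal) :=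
            EReal.coe_add _ _
        _ ≤ p u + ((∑ i, lam₀ i * u i + α * ∑ i, (u i) ^ 2 : ℝ) : EReal) :=
            add_le_add_left hpu.le _
    · -- far from the origin : use the growth condition
      push_neg at hcase
      obtain ⟨i₀, hi₀⟩ : ∃ i, δ ≤ |u i| := by
        by_contra h
        push_neg at h
        have : dist u 0 < δ := by
          rw [dist_pi_lt_iff hδ]
          intro i
          simpa [Real.dist_eq] using h i
        exact absurd this (not_lt.2 hcase)
      have hsum : δ ^ 2 ≤ ∑ i, (u i) ^ 2 := by
        calc δ ^ 2 ≤ (u i₀) ^ 2 := by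
              rw [← sq_abs (u i₀)]
              exact pow_le_pow_left₀ hδ.le hi₀ 2
          _ ≤ ∑ i, (u i) ^ 2 :=
              Finset.single_le_sum (fun i _ => sq_nonneg (u i)) (Finset.mem_univ i₀)
      have hd : c - B ≤ (∑ i, lam₀ i * u i + α * ∑ i, (u i) ^ 2)
          - (∑ i, lam₀ i * u i + α₀ * ∑ i, (u i) ^ 2) := by
        have h1 : (∑ i, lam₀ i * u i + α * ∑ i, (u i) ^ 2)
            - (∑ i, lam₀ i * u i + α₀ * ∑ i, (u i) ^ 2) = (α - α₀) * ∑ i, (u i) ^ 2 := by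
          ring
        rw [h1]
        calc c - B ≤ (α - α₀) * δ ^ 2 := hαd
          _ ≤ (α - α₀) * ∑ i, (u i) ^ 2 :=
            mul_le_mul_of_nonneg_left hsum (by linarith)
      calc (c : EReal)
          ≤ ((B + ((∑ i, lam₀ i * u i + α * ∑ i, (u i) ^ 2)
              - (∑ i, lam₀ i * u i + α₀ * ∑ i, (u i) ^ 2)) : ℝ) : EReal) :=
            EReal.coe_le_coe_iff.2 (by linarith)
        _ = (B : EReal) + (((∑ i, lam₀ i * u i + α * ∑ i, (u i) ^ 2)
              - (∑ i, lam₀ i * u i + α₀ * ∑ i, (u i) ^ 2) : ℝ) : EReal) :=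
            EReal.coe_add _ _
        _ ≤ (p u + ((∑ i, lam₀ i * u i + α₀ * ∑ i, (u i) ^ 2 : ℝ) : EReal))
              + (((∑ i, lam₀ i * u i + α * ∑ i, (u i) ^ 2)
              - (∑ i, lam₀ i * u i + α₀ * ∑ i, (u i) ^ 2) : ℝ) : EReal) :=
            add_le_add_left (hBu u) _
        _ = p u + (((∑ i, lam₀ i * u i + α₀ * ∑ i, (u i) ^ 2 : ℝ) : EReal)
              + (((∑ i, lam₀ i * u i + α * ∑ i, (u i) ^ 2)
              - (∑ i, lam₀ i * u i + α₀ * ∑ i, (u i) ^ 2) : ℝ) : EReal)) :=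
            add_assoc _ _ _
        _ = p u + ((∑ i, lam₀ i * u i + α * ∑ i, (u i) ^ 2 : ℝ) : EReal) := by
            rw [← EReal.coe_add]
            norm_num
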